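/- Let p > 1, h > 0, and let λ > 0 be the unique real root of z + 1 = p·e^{-zh}. If z is a complex number with z + 1 = p·e^{-zh} and Im z ≠ 0, then Re z < λ. -/

import Mathlib

/-- Non-real complex roots of `z + 1 = p * exp (-z*h)` have real part strictly less than
the unique positive real root `λ`. -/
theorem stmt_1 (p h lam : ℝ) (hp : 1 < p) (hh : 0 < h)
    (hlam_pos : 0 < lam) (hlam : lam + 1 = p * Real.exp (-lam * h))
    (z : ℂ) (hz : z + 1 = (p : ℂ) * Complex.exp (-z * (h : ℂ)))
    (him : z.im ≠ 0) :
    z.re < lam := by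
  by_contra hcon
  push_neg at hcon
  have hre : (-z * (h : ℂ)).re = -z.re * h := by simp [Complex.mul_re]
  have habs : ‖z + 1‖ = p * Real.exp (-z.re * h) := by
    rw [hz, norm_mul, Complex.norm_exp, hre, Complex.norm_real, Real.norm_eq_abs,
      abs_of_pos (by linarith : (0:ℝ) < p)]
  have h1 : ‖z + 1‖ ≤ lam + 1 := by
    rw [habs, hlam]
    apply mul_le_mul_of_nonneg_left _ (by linarith : (0:ℝ) ≤ p)
    exact Real.exp_le_exp.mpr (by nlinarith)
  have h2 : (z.re + 1) < ‖z + 1‖ := by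
    apply lt_of_pow_lt_pow_left₀ 2 (norm_nonneg _)
    have := Complex.sq_norm (z + 1)
    have hsq : z.im ^ 2 > 0 := by positivity
    rw [sq, this]
    simp [Complex.normSq_apply]
    nlinarith
  linarith
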